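/- arXiv:2509.23458 — 6 statements merged into one kernel-verified Lean document; each statement's English description precedes it below -/
import Mathlib

section
/- There exists an absolute constant C > 0 such that for every integer n ≥ 2 there is a set H ⊆ {(i, j) ∈ ℕ × ℕ : 1 ≤ i < j ≤ n} of cardinality at most C·n·log n with the following property: for all 1 ≤ i < j ≤ n, either (i, j) ∈ H, or there exists q with i < q < j such that (i, q) ∈ H and (q, j) ∈ H. -/
/-- The level-`ℓ` dyadic ancestor of `i`. -/
def anc (ℓ i : ℕ) : ℕ := 2 ^ ℓ * (2 * (i / 2 ^ (ℓ + 1)) + 1)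

lemma anc_eq {ℓ t i : ℕ} (h1 : 2 ^ (ℓ + 1) * t ≤ i) (h2 : i < 2 ^ (ℓ + 1) * (t + 1)) :
    anc ℓ i = 2 ^ ℓ * (2 * t + 1) := by
  have hd : i / 2 ^ (ℓ + 1) = t :=
    Nat.div_eq_of_lt_le (by rwa [mul_comm] at h1) (by rwa [mul_comm] at h2)
  simp [anc, hd]

/-- there is an absolute constant `C > 0` such that for every `n ≥ 2` the path
`1 < 2 < … < n` admits a 2-hop spanner `H` with at most `C·n·log n` edges: for all
`1 ≤ i < j ≤ n`, either `(i,j) ∈ H` or there is `q` with `i < q < j`, `(i,q) ∈ H` and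
`(q,j) ∈ H`. -/
theorem two_hop_spanner_exists :
    ∃ C : ℝ, 0 < C ∧
      ∀ n : ℕ, 2 ≤ n →
        ∃ H : Finset (ℕ × ℕ),
          (∀ p ∈ H, 1 ≤ p.1 ∧ p.1 < p.2 ∧ p.2 ≤ n) ∧
          (H.card : ℝ) ≤ C * n * Real.logb 2 n ∧
          ∀ i j : ℕ, 1 ≤ i → i < j → j ≤ n →
            ((i, j) ∈ H ∨ ∃ q, i < q ∧ q < j ∧ (i, q) ∈ H ∧ (q, j) ∈ H) := by
  refine ⟨2, by norm_num, fun n hn => ?_⟩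
  set K := Nat.log 2 n with hK
  set H : Finset (ℕ × ℕ) :=
    ((Finset.Icc 1 n ×ˢ Finset.range (K + 1)).image
      (fun p => (min p.1 (anc p.2 p.1), max p.1 (anc p.2 p.1)))).filter
      (fun p => 1 ≤ p.1 ∧ p.1 < p.2 ∧ p.2 ≤ n) with hH
  have hmem : ∀ p ∈ H, 1 ≤ p.1 ∧ p.1 < p.2 ∧ p.2 ≤ n := by
    intro p hp
    simp only [hH, Finset.mem_filter] at hp
    exact hp.2
  have hHmem : ∀ x ℓ, 1 ≤ x → x ≤ n → ℓ ≤ K → x ≠ anc ℓ x → max x (anc ℓ x) ≤ n →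
      (min x (anc ℓ x), max x (anc ℓ x)) ∈ H := by
    intro x ℓ hx1 hxn hℓ hne hmax
    have hanc1 : 0 < anc ℓ x := by unfold anc; positivity
    simp only [hH, Finset.mem_filter, Finset.mem_image]
    exact ⟨⟨(x, ℓ), by simp [Finset.mem_Icc, hx1, hxn, Nat.lt_succ_iff, hℓ], rfl⟩,
      le_min hx1 hanc1, min_lt_max.mpr hne, hmax⟩
  refine ⟨H, hmem, ?_, ?_⟩
  · -- cardinality
    have h1 : H.card ≤ n * (K + 1) := by
      calc H.card ≤ ((Finset.Icc 1 n ×ˢ Finset.range (K + 1)).image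
            (fun p => (min p.1 (anc p.2 p.1), max p.1 (anc p.2 p.1)))).card :=
            Finset.card_filter_le _ _
        _ ≤ (Finset.Icc 1 n ×ˢ Finset.range (K + 1)).card := Finset.card_image_le
        _ = n * (K + 1) := by simp [Finset.card_product, Nat.card_Icc]
    have hKlog : (K : ℝ) ≤ Real.logb 2 n := Real.natLog_le_logb n 2
    have hK1 : (1 : ℝ) ≤ (K : ℝ) := by
      have : 1 ≤ K := (Nat.le_log_iff_pow_le (by norm_num) (by omega)).mpr (by simpa using hn)
      exact_mod_cast this
    have hlogb1 : (1 : ℝ) ≤ Real.logb 2 n := le_trans hK1 hKlog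
    calc (H.card : ℝ) ≤ (n : ℝ) * (K + 1) := by exact_mod_cast h1
      _ ≤ (n : ℝ) * (Real.logb 2 n + Real.logb 2 n) := by
          have hn0 : (0:ℝ) ≤ n := by positivity
          nlinarith
      _ = 2 * n * Real.logb 2 n := by ring
  · -- spanner property
    intro i j hi hij hjn
    set P : ℕ → Prop := fun ℓ => ∃ m ∈ Finset.Icc i j, 2 ^ ℓ ∣ m with hPdef
    have hP0 : P 0 := ⟨i, by simp [Finset.mem_Icc, hij.le], one_dvd _⟩
    set ℓ := Nat.findGreatest P j with hℓdef
    have hPℓ : P ℓ := Nat.findGreatest_spec (Nat.zero_le j) hP0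
    have hnot : ¬ P (ℓ + 1) := by
      rcases le_or_gt (ℓ + 1) j with h | h
      · exact Nat.findGreatest_is_greatest (Nat.lt_succ_self _) h
      · rintro ⟨m, hm, hd⟩
        simp only [Finset.mem_Icc] at hm
        have hm0 : 0 < m := lt_of_lt_of_le hi hm.1
        have := Nat.le_of_dvd hm0 hd
        have h2 : ℓ + 1 < 2 ^ (ℓ + 1) := Nat.lt_two_pow_self
        omega
    obtain ⟨m, hmIcc, hdvd⟩ := hPℓ
    simp only [Finset.mem_Icc] at hmIcc
    obtain ⟨him, hmj⟩ := hmIcc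
    have hm1 : 1 ≤ m := le_trans hi him
    obtain ⟨c, hc⟩ := hdvd
    have hcodd : c % 2 = 1 := by
      rcases Nat.even_or_odd c with he | ho
      · obtain ⟨d, hd⟩ := he
        exact absurd ⟨m, Finset.mem_Icc.mpr ⟨him, hmj⟩, ⟨d, by rw [hc, hd]; ring⟩⟩ hnot
      · exact Nat.odd_iff.mp ho
    obtain ⟨t, hct⟩ : ∃ t, c = 2 * t + 1 := ⟨c / 2, by omega⟩
    have hmform : m = 2 ^ (ℓ + 1) * t + 2 ^ ℓ := by rw [hc, hct]; ring
    have hps : (2:ℕ) ^ (ℓ + 1) = 2 ^ ℓ + 2 ^ ℓ := by rw [pow_succ]; ring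
    have hsucc : 2 ^ (ℓ + 1) * (t + 1) = m + 2 ^ ℓ := by
      rw [hmform, pow_succ]; ring
    -- j < m + 2^ℓ
    have hjm : j < m + 2 ^ ℓ := by
      by_contra hcon
      push_neg at hcon
      exact hnot ⟨m + 2 ^ ℓ,
        Finset.mem_Icc.mpr ⟨le_trans him (Nat.le_add_right _ _), hcon⟩,
        ⟨t + 1, hsucc.symm⟩⟩
    -- 2^(ℓ+1)*t < i
    have hlow : 2 ^ (ℓ + 1) * t < i := by
      by_contra hcon
      push_neg at hcon
      refine hnot ⟨2 ^ (ℓ + 1) * t, Finset.mem_Icc.mpr ⟨hcon, ?_⟩, ⟨t, rfl⟩⟩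
      omega
    have hai : anc ℓ i = m := by
      rw [anc_eq hlow.le (hsucc ▸ lt_of_le_of_lt him (by omega)), ← hct, ← hc]
    have haj : anc ℓ j = m := by
      rw [anc_eq (by omega) (hsucc ▸ hjm), ← hct, ← hc]
    have hℓK : ℓ ≤ K := by
      have h2ℓ : 2 ^ ℓ ≤ n := by
        have : 2 ^ ℓ ≤ m := Nat.le_of_dvd hm1 ⟨c, hc⟩
        omega
      exact (Nat.le_log_iff_pow_le (by norm_num) (by omega)).mpr h2ℓ
    rcases eq_or_lt_of_le him with heq | hlt
    · -- m = i
      left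
      have haji : anc ℓ j = i := haj.trans heq.symm
      have := hHmem j ℓ (by omega) hjn hℓK (by omega) (by rw [haji]; omega)
      rwa [haji, min_comm, max_comm, min_eq_left hij.le, max_eq_right hij.le] at this
    rcases eq_or_lt_of_le hmj with heq2 | hlt2
    · -- m = j
      left
      have haij : anc ℓ i = j := hai.trans heq2
      have := hHmem i ℓ hi (by omega) hℓK (by omega) (by rw [haij]; omega)
      rwa [haij, min_eq_left hij.le, max_eq_right hij.le] at this
    · -- i < m < j
      right
      refine ⟨m, hlt, hlt2, ?_, ?_⟩
      · have := hHmem i ℓ hi (by omega) hℓK (by omega) (by rw [hai]; omega)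
        rwa [hai, min_eq_left hlt.le, max_eq_right hlt.le] at this
      · have := hHmem j ℓ (by omega) hjn hℓK (by omega) (by rw [haj]; omega)
        rwa [haj, min_comm, max_comm, min_eq_left hlt2.le, max_eq_right hlt2.le] at this
end

section
/- Let G = (V, E, w) be a weighted digraph with m = |E| edges, let r ≥ 0 be a real number, and let u, v ∈ V. For a set B ⊆ V write ‖B‖ for the number of edges of G with both endpoints in B, and let B⁺(u, r) = {y ∈ V : d_G(u, y) ≤ r} and B⁻(v, r) = {y ∈ V : d_G(y, v) ≤ r}. If ‖B⁺(u, r)‖ > m/2 and ‖B⁻(v, r)‖ > m/2, then d_G(u, v) ≤ 2r. -/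
open scoped ENNReal BigOperators

/-- A weighted digraph: edges `E` with no self-loops and positive real weights. -/
structure WDigraph (V : Type) where
  E : V → V → Prop
  no_self : ∀ v : V, ¬ E v v
  w : V → V → ℝ
  w_pos : ∀ u v : V, E u v → 0 < w u v

namespace WDigraph

variable {V : Type}

/-- `PathW G u v c`: there is a directed path from `u` to `v` in `G` of total weight `c`. -/
inductive PathW (G : WDigraph V) : V → V → ℝ → Prop
  | nil (u : V) : PathW G u u 0
  | cons {u x v : V} {c : ℝ} : G.E u x → PathW G x v c → PathW G u v (G.w u x + c)

/-- `u ⇝_G v`: there is a directed path from `u` to `v`. -/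
def Reach (G : WDigraph V) (u v : V) : Prop := Relation.ReflTransGen G.E u v

/-- The shortest-path quasimetric: infimum of path weights, `∞` if no path exists. -/
noncomputable def dist (G : WDigraph V) (u v : V) : ℝ≥0∞ :=
  ⨅ (c : ℝ) (_ : G.PathW u v c), ENNReal.ofReal c

/-- A DAG: no vertex has a nonempty directed path to itself. -/
def IsDAG (G : WDigraph V) : Prop := ∀ v : V, ¬ Relation.TransGen G.E v v

/-- Number of edges of the digraph. -/
noncomputable def edgeCount (G : WDigraph V) : ℕ := Nat.card {p : V × V // G.E p.1 p.2}

end WDigraph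


lemma WDigraph.PathW.trans {V : Type} {G : WDigraph V} {u y v : V} {c1 c2 : ℝ}
    (h1 : G.PathW u y c1) (h2 : G.PathW y v c2) : G.PathW u v (c1 + c2) := by
  induction h1 with
  | nil => simpa using h2
  | cons e _ ih => rw [add_assoc]; exact WDigraph.PathW.cons e (ih h2)

lemma WDigraph.dist_triangle {V : Type} (G : WDigraph V) (u y v : V) :
    G.dist u v ≤ G.dist u y + G.dist y v := by
  unfold WDigraph.dist
  rw [ENNReal.iInf_add]
  refine le_iInf fun c1 => ?_
  rw [ENNReal.iInf_add]
  refine le_iInf fun h1 => ?_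
  rw [ENNReal.add_iInf]
  refine le_iInf fun c2 => ?_
  rw [ENNReal.add_iInf]
  refine le_iInf fun h2 => ?_
  calc (⨅ (c : ℝ) (_ : G.PathW u v c), ENNReal.ofReal c)
      ≤ ENNReal.ofReal (c1 + c2) := iInf₂_le (c1 + c2) (h1.trans h2)
    _ ≤ ENNReal.ofReal c1 + ENNReal.ofReal c2 := ENNReal.ofReal_add_le

/-- if the out-ball `B⁺(u,r)` and the in-ball `B⁻(v,r)` each contain more
than half of the edges of `G` (edges with both endpoints in the ball), then
`d_G(u,v) ≤ 2r`. -/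
theorem heavy_balls_close {V : Type} [Fintype V] (G : WDigraph V) (r : ℝ) (hr : 0 ≤ r)
    (u v : V)
    (hout : (G.edgeCount : ℝ) / 2 <
      (Nat.card {p : V × V // G.E p.1 p.2 ∧
        G.dist u p.1 ≤ ENNReal.ofReal r ∧ G.dist u p.2 ≤ ENNReal.ofReal r} : ℝ))
    (hin : (G.edgeCount : ℝ) / 2 <
      (Nat.card {p : V × V // G.E p.1 p.2 ∧
        G.dist p.1 v ≤ ENNReal.ofReal r ∧ G.dist p.2 v ≤ ENNReal.ofReal r} : ℝ)) :
    G.dist u v ≤ ENNReal.ofReal (2 * r) := by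
  set A : Set (V × V) := {p | G.E p.1 p.2 ∧
    G.dist u p.1 ≤ ENNReal.ofReal r ∧ G.dist u p.2 ≤ ENNReal.ofReal r} with hA
  set B : Set (V × V) := {p | G.E p.1 p.2 ∧
    G.dist p.1 v ≤ ENNReal.ofReal r ∧ G.dist p.2 v ≤ ENNReal.ofReal r} with hB
  have hcardA : Nat.card {p : V × V // G.E p.1 p.2 ∧
      G.dist u p.1 ≤ ENNReal.ofReal r ∧ G.dist u p.2 ≤ ENNReal.ofReal r} = A.ncard :=
    (Nat.card_coe_set_eq A).symm
  have hcardB : Nat.card {p : V × V // G.E p.1 p.2 ∧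
      G.dist p.1 v ≤ ENNReal.ofReal r ∧ G.dist p.2 v ≤ ENNReal.ofReal r} = B.ncard :=
    (Nat.card_coe_set_eq B).symm
  rw [hcardA] at hout
  rw [hcardB] at hin
  have hm : (G.edgeCount : ℝ) < A.ncard + B.ncard := by linarith
  have hmn : G.edgeCount < A.ncard + B.ncard := by exact_mod_cast hm
  have hsub : A ∪ B ⊆ {p : V × V | G.E p.1 p.2} := by
    rintro p (hp | hp) <;> exact hp.1
  have hEcard : ({p : V × V | G.E p.1 p.2}).ncard = G.edgeCount :=
    Nat.card_coe_set_eq _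
  have hunion : (A ∪ B).ncard ≤ G.edgeCount := by
    rw [← hEcard]
    exact Set.ncard_le_ncard hsub (Set.toFinite _)
  have hie : A.ncard + B.ncard = (A ∪ B).ncard + (A ∩ B).ncard := by
    rw [Set.ncard_union_add_ncard_inter A B (Set.toFinite _) (Set.toFinite _)]
  have hpos : 0 < (A ∩ B).ncard := by omega
  obtain ⟨p, hpA, hpB⟩ := Set.nonempty_of_ncard_ne_zero (by omega : (A ∩ B).ncard ≠ 0)
  calc G.dist u v ≤ G.dist u p.1 + G.dist p.1 v := G.dist_triangle u p.1 v
    _ ≤ ENNReal.ofReal r + ENNReal.ofReal r := add_le_add hpA.2.1 hpB.2.1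
    _ = ENNReal.ofReal (2 * r) := by rw [← ENNReal.ofReal_add hr hr, two_mul]
end

section
/- Let G = (V, E, w) be a weighted digraph with a laminar topological order (<_D, 𝒫), enumerate V as v₁ <_D v₂ <_D … <_D v_n, and let H be a 2-hop spanner with respect to this enumeration. Let D₁ be a weighted digraph on V that contains, for every (v_i, v_j) ∈ H with v_i ⇝_G v_j, the edge (v_i, v_j) with weight d_G(v_i, v_j), and let D₂ be a weighted digraph on V that contains, for every (v_i, v_j) ∈ H with v_j ⇝_G v_i, the edge (v_j, v_i) with weight d_G(v_j, v_i). Then for all s, t ∈ V, min(d_{D₁}(s,t), d_{D₂}(s,t)) ≤ 2·Δ_{s,t}; moreover, if s <_D t then d_{D₁}(s,t) ≤ 2·Δ_{s,t}, and if t <_D s then d_{D₂}(s,t) ≤ 2·Δ_{s,t}. -/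
open scoped ENNReal BigOperators

/-- A laminar topological order of a weighted digraph `G` over a linearly ordered vertex
set: a laminar family of clusters containing all singletons, each cluster being an
interval of the order and inducing a strongly connected subgraph. -/
structure LaminarTO {V : Type} [LinearOrder V] (G : WDigraph V) where
  P : Set (Set V)
  nonempty_mem : ∀ C ∈ P, C.Nonempty
  singleton_mem : ∀ v : V, ({v} : Set V) ∈ P
  laminar : ∀ C₁ ∈ P, ∀ C₂ ∈ P, C₁ ∩ C₂ = ∅ ∨ C₁ ⊆ C₂ ∨ C₂ ⊆ C₁
  interval : ∀ C ∈ P, ∀ u ∈ C, ∀ v ∈ C, ∀ x : V, u ≤ x → x ≤ v → x ∈ C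
  strongly_connected : ∀ C ∈ P, ∀ u ∈ C, ∀ v ∈ C,
    Relation.ReflTransGen (fun a b => G.E a b ∧ a ∈ C ∧ b ∈ C) u v

/-- The weak diameter `Δ_C` of a cluster `C`. -/
noncomputable def clusterDiam {V : Type} (G : WDigraph V) (C : Set V) : ℝ≥0∞ :=
  ⨆ x ∈ C, ⨆ y ∈ C, G.dist x y

/-- `Δ_{s,t}`: the weak diameter of the inclusion-minimal cluster of the laminar family
containing both `s` and `t` (by laminarity and monotonicity of the diameter this equals
the infimum below), and `∞` if no cluster contains both. -/
noncomputable def pairDiam {V : Type} [LinearOrder V] {G : WDigraph V}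
    (LP : LaminarTO G) (s t : V) : ℝ≥0∞ :=
  ⨅ (C : Set V) (_ : C ∈ LP.P) (_ : s ∈ C) (_ : t ∈ C), clusterDiam G C

/-- A 2-hop spanner of the linearly ordered vertex set: for every `u < v`, either
`(u,v) ∈ H` or some `x` with `u < x < v` satisfies `(u,x) ∈ H` and `(x,v) ∈ H`. -/
def TwoHopSpanner {V : Type} [LinearOrder V] (H : Set (V × V)) : Prop :=
  (∀ p ∈ H, p.1 < p.2) ∧
  ∀ u v : V, u < v → ((u, v) ∈ H ∨ ∃ x : V, u < x ∧ x < v ∧ (u, x) ∈ H ∧ (x, v) ∈ H)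

section Aux

variable {V : Type}

lemma WDigraph.dist_le_of_pathW (G : WDigraph V) {u v : V} {c : ℝ}
    (h : G.PathW u v c) : G.dist u v ≤ ENNReal.ofReal c :=
  iInf₂_le c h

lemma WDigraph.dist_self_eq_zero (G : WDigraph V) (u : V) : G.dist u u = 0 := by
  have := G.dist_le_of_pathW (WDigraph.PathW.nil u)
  simpa using this

lemma WDigraph.dist_le_clusterDiam (G : WDigraph V) {C : Set V} {u v : V}
    (hu : u ∈ C) (hv : v ∈ C) : G.dist u v ≤ clusterDiam G C := by
  unfold clusterDiam
  exact le_trans (le_biSup _ hv) (le_biSup (fun x => ⨆ y ∈ C, G.dist x y) hu)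

lemma two_mul_iInf {ι : Sort _} (f : ι → ℝ≥0∞) :
    2 * (⨅ i, f i) = ⨅ i, 2 * f i :=
  ENNReal.mul_iInf_of_ne two_ne_zero (by norm_num)

/-- The key per-cluster bound. -/
lemma cluster_bound {V : Type} [LinearOrder V]
    (G : WDigraph V) (H : Set (V × V)) (hH : TwoHopSpanner H)
    (D₁ : WDigraph V)
    (hD₁ : ∀ p ∈ H, G.Reach p.1 p.2 →
      D₁.E p.1 p.2 ∧ ENNReal.ofReal (D₁.w p.1 p.2) = G.dist p.1 p.2)
    {C : Set V} (hint : ∀ u ∈ C, ∀ v ∈ C, ∀ x : V, u ≤ x → x ≤ v → x ∈ C)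
    (hsc : ∀ u ∈ C, ∀ v ∈ C,
      Relation.ReflTransGen (fun a b => G.E a b ∧ a ∈ C ∧ b ∈ C) u v)
    {s t : V} (hs : s ∈ C) (ht : t ∈ C) (hlt : s < t) :
    D₁.dist s t ≤ 2 * clusterDiam G C := by
  have reach : ∀ u ∈ C, ∀ v ∈ C, G.Reach u v := fun u hu v hv =>
    Relation.ReflTransGen.mono (p := G.E) (fun a b (hab : G.E a b ∧ a ∈ C ∧ b ∈ C) => hab.1) u v (hsc u hu v hv)
  rcases hH.2 s t hlt with hmem | ⟨x, hsx, hxt, h1, h2⟩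
  · obtain ⟨hE, hw⟩ := hD₁ (s, t) hmem (reach s hs t ht)
    have hpath : D₁.PathW s t (D₁.w s t + 0) :=
      WDigraph.PathW.cons hE (WDigraph.PathW.nil t)
    calc D₁.dist s t ≤ ENNReal.ofReal (D₁.w s t + 0) := D₁.dist_le_of_pathW hpath
      _ = G.dist s t := by rw [add_zero]; exact hw
      _ ≤ clusterDiam G C := G.dist_le_clusterDiam hs ht
      _ ≤ 2 * clusterDiam G C := by
          rw [two_mul]; exact le_add_self
  · have hx : x ∈ C := hint s hs t ht x hsx.le hxt.le
    obtain ⟨hE1, hw1⟩ := hD₁ (s, x) h1 (reach s hs x hx)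
    obtain ⟨hE2, hw2⟩ := hD₁ (x, t) h2 (reach x hx t ht)
    have hpath : D₁.PathW s t (D₁.w s x + (D₁.w x t + 0)) :=
      WDigraph.PathW.cons hE1 (WDigraph.PathW.cons hE2 (WDigraph.PathW.nil t))
    calc D₁.dist s t ≤ ENNReal.ofReal (D₁.w s x + (D₁.w x t + 0)) :=
          D₁.dist_le_of_pathW hpath
      _ ≤ ENNReal.ofReal (D₁.w s x) + ENNReal.ofReal (D₁.w x t + 0) :=
          ENNReal.ofReal_add_le
      _ = G.dist s x + G.dist x t := by rw [add_zero, hw1, hw2]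
      _ ≤ clusterDiam G C + clusterDiam G C :=
          add_le_add (G.dist_le_clusterDiam hs hx) (G.dist_le_clusterDiam hx ht)
      _ = 2 * clusterDiam G C := (two_mul _).symm

end Aux

/-- if `D₁` contains the forward 2-hop-spanner edges (for reachable pairs,
weighted by `d_G`), and `D₂` the backward ones, then for all `s,t`,
`min(d_{D₁}(s,t), d_{D₂}(s,t)) ≤ 2·Δ_{s,t}`; moreover `d_{D₁}(s,t) ≤ 2·Δ_{s,t}` when
`s <_D t` and `d_{D₂}(s,t) ≤ 2·Δ_{s,t}` when `t <_D s`. -/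
theorem two_hop_spanner_distance_bound {V : Type} [Fintype V] [LinearOrder V]
    (G : WDigraph V) (LP : LaminarTO G) (H : Set (V × V)) (hH : TwoHopSpanner H)
    (D₁ D₂ : WDigraph V)
    (hD₁ : ∀ p ∈ H, G.Reach p.1 p.2 →
      D₁.E p.1 p.2 ∧ ENNReal.ofReal (D₁.w p.1 p.2) = G.dist p.1 p.2)
    (hD₂ : ∀ p ∈ H, G.Reach p.2 p.1 →
      D₂.E p.2 p.1 ∧ ENNReal.ofReal (D₂.w p.2 p.1) = G.dist p.2 p.1) :
    ∀ s t : V,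
      min (D₁.dist s t) (D₂.dist s t) ≤ 2 * pairDiam LP s t ∧
      (s < t → D₁.dist s t ≤ 2 * pairDiam LP s t) ∧
      (t < s → D₂.dist s t ≤ 2 * pairDiam LP s t) := by
  -- `D₂` plays the role of `D₁` for the reverse order.
  intro s t
  have h2pd : ∀ s t : V, 2 * pairDiam LP s t =
      ⨅ (C : Set V) (_ : C ∈ LP.P) (_ : s ∈ C) (_ : t ∈ C), 2 * clusterDiam G C := by
    intro s t
    unfold pairDiam
    rw [two_mul_iInf]
    refine iInf_congr fun C => ?_
    rw [two_mul_iInf]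
    refine iInf_congr fun _ => ?_
    rw [two_mul_iInf]
    refine iInf_congr fun _ => ?_
    rw [two_mul_iInf]
  have hD₂' : ∀ p ∈ (fun p : V × V => (p.2, p.1)) '' H,
      G.Reach p.1 p.2 → D₂.E p.1 p.2 ∧ ENNReal.ofReal (D₂.w p.1 p.2) = G.dist p.1 p.2 := by
    rintro p ⟨q, hq, rfl⟩ hr
    exact hD₂ q hq hr
  have hH' : TwoHopSpanner (V := Vᵒᵈ) ((fun p : V × V => (p.2, p.1)) '' H) := by
    constructor
    · rintro p ⟨q, hq, rfl⟩
      exact hH.1 q hq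
    · intro u v huv
      rcases hH.2 v u huv with hmem | ⟨x, hvx, hxu, h1, h2⟩
      · exact Or.inl ⟨(v, u), hmem, rfl⟩
      · exact Or.inr ⟨x, hxu, hvx, ⟨(x, u), h2, rfl⟩, ⟨(v, x), h1, rfl⟩⟩
  have key1 : s < t → D₁.dist s t ≤ 2 * pairDiam LP s t := by
    intro hlt
    rw [h2pd]
    refine le_iInf fun C => le_iInf fun hC => le_iInf fun hs => le_iInf fun ht => ?_
    exact cluster_bound G H hH D₁ hD₁ (LP.interval C hC) (LP.strongly_connected C hC)
      hs ht hlt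
  have key2 : t < s → D₂.dist s t ≤ 2 * pairDiam LP s t := by
    intro hlt
    rw [h2pd]
    refine le_iInf fun C => le_iInf fun hC => le_iInf fun hs => le_iInf fun ht => ?_
    exact cluster_bound (V := Vᵒᵈ) G _ hH' D₂ hD₂'
      (fun u hu v hv x hux hxv => LP.interval C hC v hv u hu x hxv hux)
      (fun u hu v hv => LP.strongly_connected C hC u hu v hv)
      hs ht hlt
  refine ⟨?_, key1, key2⟩
  rcases lt_trichotomy s t with h | h | h
  · exact le_trans (min_le_left _ _) (key1 h)
  · subst h
    calc min (D₁.dist s s) (D₂.dist s s) ≤ D₁.dist s s := min_le_left _ _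
      _ = 0 := D₁.dist_self_eq_zero s
      _ ≤ _ := zero_le
  · exact le_trans (min_le_right _ _) (key2 h)
end

section
/- Let G = (V, E, w) be a weighted digraph with a laminar topological order (<_D, 𝒫); enumerate V as v₁ <_D v₂ <_D … <_D v_n and let H be a 2-hop spanner with respect to this enumeration. Let D ⊆ E be a set of edges such that x <_D y for every (x, y) ∈ D. Let D₁ be the weighted digraph on V whose edges are: (a) all pairs (v_i, v_j) ∈ H with v_i ⇝_G v_j, and (b) for every (x, y) ∈ D and every pair of disjoint clusters C_x, C_y ∈ 𝒫 with x ∈ C_x and y ∈ C_y, the pair (C_x^last, C_y^first); every edge (a, b) of D₁ carries weight d_G(a, b). For s, t ∈ V define α(s, t) := d_{D₁}(s, t) if s = t or s <_D t, and α(s, t) := 3·Δ_{s,t} otherwise. Suppose s, t ∈ V, π is a directed path from s to t of total weight d_G(s, t), C_s, C_t ∈ 𝒫 are disjoint clusters, (u, v) is an edge of π with (u, v) ∈ D, the prefix of π from s to u is contained in C_s, and the suffix of π from v to t is contained in C_t. Then α(s, t) ≤ α(s, u) + d_G(u, v) + α(v, t). -/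
open scoped ENNReal BigOperators

/-- `α(s,t) := d_{D₁}(s,t)` if `s = t` or `s <_D t`, and `α(s,t) := 3·Δ_{s,t}` otherwise. -/
noncomputable def alphaFn {V : Type} [LinearOrder V] {G : WDigraph V}
    (LP : LaminarTO G) (D₁ : WDigraph V) (s t : V) : ℝ≥0∞ :=
  if s ≤ t then D₁.dist s t else 3 * pairDiam LP s t


namespace WDigraph

lemma PathW.append {V : Type} {G : WDigraph V} {x y z : V} {c d : ℝ}
    (h1 : PathW G x y c) (h2 : PathW G y z d) : PathW G x z (c + d) := by
  induction h1 with
  | nil u => simpa using h2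
  | cons he _ ih => rw [add_assoc]; exact PathW.cons he (ih h2)

lemma dist_le {V : Type} {G : WDigraph V} {x y : V} {c : ℝ} (h : PathW G x y c) :
    G.dist x y ≤ ENNReal.ofReal c :=
  iInf_le_of_le c (iInf_le _ h)

lemma dist_self' {V : Type} (G : WDigraph V) (x : V) : G.dist x x = 0 :=
  le_antisymm (by simpa using dist_le (PathW.nil (G := G) x)) (zero_le)

lemma dist_triangle_s9 {V : Type} (G : WDigraph V) (x y z : V) :
    G.dist x z ≤ G.dist x y + G.dist y z := by
  have h : G.dist x y + G.dist y z =
      ⨅ (c1 : ℝ) (_ : G.PathW x y c1) (c2 : ℝ) (_ : G.PathW y z c2),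
        (ENNReal.ofReal c1 + ENNReal.ofReal c2) := by
    rw [dist, dist, ENNReal.iInf_add]
    refine iInf_congr fun c1 => ?_
    rw [ENNReal.iInf_add]
    refine iInf_congr fun p1 => ?_
    rw [ENNReal.add_iInf]
    exact iInf_congr fun c2 => ENNReal.add_iInf
  rw [h]
  exact le_iInf fun c1 => le_iInf fun p1 => le_iInf fun c2 => le_iInf fun p2 =>
    le_trans (dist_le (p1.append p2)) ENNReal.ofReal_add_le

end WDigraph

lemma dist_le_clusterDiam {V : Type} (G : WDigraph V) {C : Set V} {x y : V}
    (hx : x ∈ C) (hy : y ∈ C) : G.dist x y ≤ clusterDiam G C :=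
  le_iSup₂_of_le x hx (le_iSup₂_of_le y hy le_rfl)

lemma clusterDiam_mono {V : Type} (G : WDigraph V) {C₁ C₂ : Set V} (h : C₁ ⊆ C₂) :
    clusterDiam G C₁ ≤ clusterDiam G C₂ :=
  iSup₂_le fun x hx => iSup₂_le fun y hy => dist_le_clusterDiam G (h hx) (h hy)

lemma clusterDiam_singleton {V : Type} (G : WDigraph V) (x : V) :
    clusterDiam G ({x} : Set V) = 0 := by
  simp [clusterDiam, WDigraph.dist_self']

lemma le_three_mul_iInf_add {ι : Sort*} (f : ι → ℝ≥0∞) {L x : ℝ≥0∞}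
    (h : ∀ i, L ≤ 3 * f i + x) : L ≤ 3 * iInf f + x := by
  rcases isEmpty_or_nonempty ι with hι | hι
  · simp [iInf_of_empty]
  · rw [ENNReal.mul_iInf_of_ne (by norm_num) (by norm_num), ENNReal.iInf_add]
    exact le_iInf h

/-- triangle-type inequality for `α`.  Here `D₁` has exactly the edges
(a) of the 2-hop spanner `H` between reachable pairs, and (b) the edges
`(C_x^last, C_y^first)` for every `(x,y) ∈ D` and disjoint clusters `C_x ∋ x`, `C_y ∋ y`;
each edge `(a,b)` of `D₁` carries weight `d_G(a,b)`.  If a shortest `s`–`t` path `π`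
(of total weight `d_G(s,t)`) has an edge `(u,v) ∈ D` with the prefix `π[s,u]` inside a
cluster `C_s` and the suffix `π[v,t]` inside a cluster `C_t`, `C_s` and `C_t` disjoint,
then `α(s,t) ≤ α(s,u) + d_G(u,v) + α(v,t)`. -/
theorem alpha_triangle {V : Type} [Fintype V] [LinearOrder V]
    (G : WDigraph V) (LP : LaminarTO G) (H : Set (V × V)) (hH : TwoHopSpanner H)
    (D : Set (V × V)) (hD : ∀ p ∈ D, G.E p.1 p.2 ∧ p.1 < p.2)
    (fst lst : Set V → V)
    (hfst : ∀ C ∈ LP.P, fst C ∈ C ∧ ∀ x ∈ C, fst C ≤ x)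
    (hlst : ∀ C ∈ LP.P, lst C ∈ C ∧ ∀ x ∈ C, x ≤ lst C)
    (D₁ : WDigraph V)
    (hE : ∀ a b : V, D₁.E a b ↔
      (((a, b) ∈ H ∧ G.Reach a b) ∨
        ∃ x y : V, ∃ Cx Cy : Set V, (x, y) ∈ D ∧ Cx ∈ LP.P ∧ Cy ∈ LP.P ∧
          Disjoint Cx Cy ∧ x ∈ Cx ∧ y ∈ Cy ∧ a = lst Cx ∧ b = fst Cy))
    (hw : ∀ a b : V, D₁.E a b → ENNReal.ofReal (D₁.w a b) = G.dist a b)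
    (s t u v : V) (Cs Ct : Set V) (hCs : Cs ∈ LP.P) (hCt : Ct ∈ LP.P)
    (hdisj : Disjoint Cs Ct)
    (q : ℕ) (z : ℕ → V) (hz0 : z 0 = s) (hzq : z q = t)
    (hedges : ∀ i, i < q → G.E (z i) (z (i + 1)))
    (hweight : ENNReal.ofReal (∑ i ∈ Finset.range q, G.w (z i) (z (i + 1))) = G.dist s t)
    (j : ℕ) (hj : j < q) (hu : z j = u) (hv : z (j + 1) = v)
    (huv : (u, v) ∈ D)
    (hpre : ∀ i, i ≤ j → z i ∈ Cs)
    (hsuf : ∀ i, j + 1 ≤ i → i ≤ q → z i ∈ Ct) :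
    alphaFn LP D₁ s t ≤ alphaFn LP D₁ s u + G.dist u v + alphaFn LP D₁ v t := by
  classical
  obtain ⟨-, huvlt⟩ := hD _ huv
  have hj' : j + 1 ≤ q := hj
  have hsCs : s ∈ Cs := by rw [← hz0]; exact hpre 0 (Nat.zero_le _)
  have huCs : u ∈ Cs := by rw [← hu]; exact hpre j le_rfl
  have hvCt : v ∈ Ct := by rw [← hv]; exact hsuf (j + 1) le_rfl hj'
  have htCt : t ∈ Ct := by rw [← hzq]; exact hsuf q hj' le_rfl
  have cross : ∀ x ∈ Cs, ∀ y ∈ Ct, x < y := by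
    intro x hx y hy
    by_contra hc
    push_neg at hc
    rcases le_or_gt y u with h1 | h1
    · exact Set.disjoint_left.mp hdisj huCs
        (LP.interval Ct hCt y hy v hvCt u h1 huvlt.le)
    · exact Set.disjoint_left.mp hdisj
        (LP.interval Cs hCs u huCs x hx y h1.le hc) hy
  have hst : s < t := cross s hsCs t htCt
  have reach : ∀ C ∈ LP.P, ∀ x ∈ C, ∀ y ∈ C, G.Reach x y := fun C hC x hx y hy =>
    Relation.ReflTransGen.mono (fun a b (h : G.E a b ∧ a ∈ C ∧ b ∈ C) => h.1) x y
      (LP.strongly_connected C hC x hx y hy)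
  have hedge_dist : ∀ a b : V, D₁.E a b → D₁.dist a b ≤ G.dist a b := by
    intro a b hab
    have h := WDigraph.dist_le (WDigraph.PathW.cons hab (WDigraph.PathW.nil b))
    rwa [add_zero, hw a b hab] at h
  have hspan : ∀ C ∈ LP.P, ∀ x ∈ C, ∀ y ∈ C, x ≤ y →
      D₁.dist x y ≤ 2 * clusterDiam G C := by
    intro C hC x hx y hy hxy
    rcases eq_or_lt_of_le hxy with rfl | hlt
    · simp [WDigraph.dist_self']
    rcases hH.2 x y hlt with hxy' | ⟨m, hxm, hmy, h1, h2⟩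
    · have he : D₁.E x y := (hE x y).mpr (Or.inl ⟨hxy', reach C hC x hx y hy⟩)
      calc D₁.dist x y ≤ G.dist x y := hedge_dist _ _ he
        _ ≤ clusterDiam G C := dist_le_clusterDiam G hx hy
        _ ≤ 2 * clusterDiam G C := by rw [two_mul]; exact le_self_add
    · have hmC : m ∈ C := LP.interval C hC x hx y hy m hxm.le hmy.le
      have he1 : D₁.E x m := (hE x m).mpr (Or.inl ⟨h1, reach C hC x hx m hmC⟩)
      have he2 : D₁.E m y := (hE m y).mpr (Or.inl ⟨h2, reach C hC m hmC y hy⟩)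
      calc D₁.dist x y ≤ D₁.dist x m + D₁.dist m y := D₁.dist_triangle_s9 _ _ _
        _ ≤ clusterDiam G C + clusterDiam G C :=
            add_le_add (le_trans (hedge_dist _ _ he1) (dist_le_clusterDiam G hx hmC))
              (le_trans (hedge_dist _ _ he2) (dist_le_clusterDiam G hmC hy))
        _ = 2 * clusterDiam G C := (two_mul _).symm
  have main : ∀ C' C'' : Set V, C' ∈ LP.P → C'' ∈ LP.P → u ∈ C' → v ∈ C'' →
      C' ⊆ Cs → C'' ⊆ Ct →
      D₁.dist s t ≤ D₁.dist s (lst C') +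
        (clusterDiam G C' + G.dist u v + clusterDiam G C'') + D₁.dist (fst C'') t := by
    intro C' C'' hC' hC'' huC' hvC'' hsub' hsub''
    have hdisj' : Disjoint C' C'' := hdisj.mono hsub' hsub''
    have he : D₁.E (lst C') (fst C'') := (hE _ _).mpr
      (Or.inr ⟨u, v, C', C'', huv, hC', hC'', hdisj', huC', hvC'', rfl, rfl⟩)
    have hmid : D₁.dist (lst C') (fst C'') ≤
        clusterDiam G C' + G.dist u v + clusterDiam G C'' := by
      refine le_trans (hedge_dist _ _ he) ?_
      calc G.dist (lst C') (fst C'')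
          ≤ G.dist (lst C') u + G.dist u (fst C'') := G.dist_triangle_s9 _ _ _
        _ ≤ G.dist (lst C') u + (G.dist u v + G.dist v (fst C'')) := by
            gcongr
            exact G.dist_triangle_s9 _ _ _
        _ ≤ clusterDiam G C' + (G.dist u v + clusterDiam G C'') := by
            gcongr
            · exact dist_le_clusterDiam G (hlst C' hC').1 huC'
            · exact dist_le_clusterDiam G hvC'' (hfst C'' hC'').1
        _ = clusterDiam G C' + G.dist u v + clusterDiam G C'' := by ring
    calc D₁.dist s t ≤ D₁.dist s (lst C') + D₁.dist (lst C') t := D₁.dist_triangle_s9 _ _ _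
      _ ≤ D₁.dist s (lst C') + (D₁.dist (lst C') (fst C'') + D₁.dist (fst C'') t) := by
          gcongr
          exact D₁.dist_triangle_s9 _ _ _
      _ ≤ D₁.dist s (lst C') +
            ((clusterDiam G C' + G.dist u v + clusterDiam G C'') + D₁.dist (fst C'') t) := by
          gcongr
      _ = _ := by ring
  have hluu : lst ({u} : Set V) = u := (hlst _ (LP.singleton_mem u)).1
  have hfvv : fst ({v} : Set V) = v := (hfst _ (LP.singleton_mem v)).1
  -- B: bound when the right side uses a cluster C'' containing v and t
  have B : ∀ C' C'' : Set V, C' ∈ LP.P → C'' ∈ LP.P → u ∈ C' → v ∈ C'' → t ∈ C'' →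
      C' ⊆ Cs → C'' ⊆ Ct →
      D₁.dist s t ≤ D₁.dist s (lst C') + clusterDiam G C' + G.dist u v +
        3 * clusterDiam G C'' := by
    intro C' C'' hC' hC'' huC' hvC'' htC'' hsub' hsub''
    have h1 := main C' C'' hC' hC'' huC' hvC'' hsub' hsub''
    have h2 : D₁.dist (fst C'') t ≤ 2 * clusterDiam G C'' :=
      hspan C'' hC'' (fst C'') (hfst C'' hC'').1 t htC'' ((hfst C'' hC'').2 t htC'')
    calc D₁.dist s t ≤ D₁.dist s (lst C') +
          (clusterDiam G C' + G.dist u v + clusterDiam G C'') +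
          2 * clusterDiam G C'' := by
          refine le_trans h1 ?_
          gcongr
      _ = D₁.dist s (lst C') + clusterDiam G C' + G.dist u v +
          3 * clusterDiam G C'' := by ring
  -- B2: bound when v ≤ t, right side is direct
  have B2 : ∀ C' : Set V, C' ∈ LP.P → u ∈ C' → C' ⊆ Cs →
      D₁.dist s t ≤ D₁.dist s (lst C') + clusterDiam G C' + G.dist u v +
        D₁.dist v t := by
    intro C' hC' huC' hsub'
    have h1 := main C' {v} hC' (LP.singleton_mem v) huC' rfl hsub'
      (Set.singleton_subset_iff.mpr hvCt)
    rw [hfvv, clusterDiam_singleton] at h1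
    calc D₁.dist s t ≤ D₁.dist s (lst C') +
          (clusterDiam G C' + G.dist u v + 0) + D₁.dist v t := h1
      _ = _ := by ring
  -- left-side reduction by laminarity
  have leftRed : ∀ C ∈ LP.P, s ∈ C → u ∈ C → ∃ C', C' ∈ LP.P ∧ C' ⊆ Cs ∧
      s ∈ C' ∧ u ∈ C' ∧ clusterDiam G C' ≤ clusterDiam G C := by
    intro C hC hsC huC
    rcases LP.laminar C hC Cs hCs with hvoid | hsub | hsub
    · exact absurd (Set.eq_empty_iff_forall_notMem.mp hvoid s ⟨hsC, hsCs⟩) (fun h => h)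
    · exact ⟨C, hC, hsub, hsC, huC, le_rfl⟩
    · exact ⟨Cs, hCs, le_rfl, hsCs, huCs, clusterDiam_mono G hsub⟩
  have rightRed : ∀ C ∈ LP.P, v ∈ C → t ∈ C → ∃ C'', C'' ∈ LP.P ∧ C'' ⊆ Ct ∧
      v ∈ C'' ∧ t ∈ C'' ∧ clusterDiam G C'' ≤ clusterDiam G C := by
    intro C hC hvC htC
    rcases LP.laminar C hC Ct hCt with hvoid | hsub | hsub
    · exact absurd (Set.eq_empty_iff_forall_notMem.mp hvoid v ⟨hvC, hvCt⟩) (fun h => h)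
    · exact ⟨C, hC, hsub, hvC, htC, le_rfl⟩
    · exact ⟨Ct, hCt, le_rfl, hvCt, htCt, clusterDiam_mono G hsub⟩
  have hαst : alphaFn LP D₁ s t = D₁.dist s t := if_pos hst.le
  rcases le_or_gt s u with hsu | hus <;> rcases le_or_gt v t with hvt | htv
  · -- s ≤ u, v ≤ t
    rw [hαst, alphaFn, if_pos hsu, alphaFn, if_pos hvt]
    have h1 := B2 {u} (LP.singleton_mem u) rfl (Set.singleton_subset_iff.mpr huCs)
    rw [hluu, clusterDiam_singleton, add_zero] at h1
    exact h1
  · -- s ≤ u, t < v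
    rw [hαst, alphaFn, if_pos hsu, alphaFn, if_neg (not_le.mpr htv)]
    have key : D₁.dist s t ≤ 3 * pairDiam LP v t + (D₁.dist s u + G.dist u v) := by
      simp only [pairDiam]
      refine le_three_mul_iInf_add _ fun C => ?_
      refine le_three_mul_iInf_add _ fun hC => ?_
      refine le_three_mul_iInf_add _ fun hvC => ?_
      refine le_three_mul_iInf_add _ fun htC => ?_
      obtain ⟨C'', hC'', hsub'', hvC'', htC'', hle⟩ := rightRed C hC hvC htC
      have h1 := B {u} C'' (LP.singleton_mem u) hC'' rfl hvC'' htC''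
        (Set.singleton_subset_iff.mpr huCs) hsub''
      rw [hluu, clusterDiam_singleton, add_zero] at h1
      calc D₁.dist s t ≤ D₁.dist s u + G.dist u v + 3 * clusterDiam G C'' := h1
        _ ≤ D₁.dist s u + G.dist u v + 3 * clusterDiam G C := by gcongr
        _ = 3 * clusterDiam G C + (D₁.dist s u + G.dist u v) := by ring
    calc D₁.dist s t ≤ 3 * pairDiam LP v t + (D₁.dist s u + G.dist u v) := key
      _ = D₁.dist s u + G.dist u v + 3 * pairDiam LP v t := by ring
  · -- u < s, v ≤ t
    rw [hαst, alphaFn, if_neg (not_le.mpr hus), alphaFn, if_pos hvt]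
    have key : D₁.dist s t ≤ 3 * pairDiam LP s u + (G.dist u v + D₁.dist v t) := by
      simp only [pairDiam]
      refine le_three_mul_iInf_add _ fun C => ?_
      refine le_three_mul_iInf_add _ fun hC => ?_
      refine le_three_mul_iInf_add _ fun hsC => ?_
      refine le_three_mul_iInf_add _ fun huC => ?_
      obtain ⟨C', hC', hsub', hsC', huC', hle⟩ := leftRed C hC hsC huC
      have h1 := B2 C' hC' huC' hsub'
      have h2 : D₁.dist s (lst C') ≤ 2 * clusterDiam G C' :=
        hspan C' hC' s hsC' (lst C') (hlst C' hC').1 ((hlst C' hC').2 s hsC')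
      calc D₁.dist s t ≤ 2 * clusterDiam G C' + clusterDiam G C' + G.dist u v +
            D₁.dist v t := by refine le_trans h1 ?_; gcongr
        _ = 3 * clusterDiam G C' + (G.dist u v + D₁.dist v t) := by ring
        _ ≤ 3 * clusterDiam G C + (G.dist u v + D₁.dist v t) := by gcongr
    calc D₁.dist s t ≤ 3 * pairDiam LP s u + (G.dist u v + D₁.dist v t) := key
      _ = 3 * pairDiam LP s u + G.dist u v + D₁.dist v t := by ring
  · -- u < s, t < v
    rw [hαst, alphaFn, if_neg (not_le.mpr hus), alphaFn, if_neg (not_le.mpr htv)]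
    have key : D₁.dist s t ≤ 3 * pairDiam LP s u +
        (G.dist u v + 3 * pairDiam LP v t) := by
      conv_lhs => rw [show D₁.dist s t = D₁.dist s t from rfl]
      simp only [pairDiam]
      refine le_three_mul_iInf_add _ fun C => ?_
      refine le_three_mul_iInf_add _ fun hC => ?_
      refine le_three_mul_iInf_add _ fun hsC => ?_
      refine le_three_mul_iInf_add _ fun huC => ?_
      obtain ⟨C', hC', hsub', hsC', huC', hle⟩ := leftRed C hC hsC huC
      have key2 : D₁.dist s t ≤ 3 * (⨅ (C₂ : Set V) (_ : C₂ ∈ LP.P) (_ : v ∈ C₂)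
          (_ : t ∈ C₂), clusterDiam G C₂) + (3 * clusterDiam G C + G.dist u v) := by
        refine le_three_mul_iInf_add _ fun C₂ => ?_
        refine le_three_mul_iInf_add _ fun hC₂ => ?_
        refine le_three_mul_iInf_add _ fun hvC₂ => ?_
        refine le_three_mul_iInf_add _ fun htC₂ => ?_
        obtain ⟨C'', hC'', hsub'', hvC'', htC'', hle2⟩ := rightRed C₂ hC₂ hvC₂ htC₂
        have h1 := B C' C'' hC' hC'' huC' hvC'' htC'' hsub' hsub''
        have h2 : D₁.dist s (lst C') ≤ 2 * clusterDiam G C' :=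
          hspan C' hC' s hsC' (lst C') (hlst C' hC').1 ((hlst C' hC').2 s hsC')
        calc D₁.dist s t ≤ 2 * clusterDiam G C' + clusterDiam G C' + G.dist u v +
              3 * clusterDiam G C'' := by refine le_trans h1 ?_; gcongr
          _ ≤ 2 * clusterDiam G C + clusterDiam G C + G.dist u v +
              3 * clusterDiam G C₂ := by gcongr
          _ = 3 * clusterDiam G C₂ + (3 * clusterDiam G C + G.dist u v) := by ring
      calc D₁.dist s t ≤ 3 * (⨅ (C₂ : Set V) (_ : C₂ ∈ LP.P) (_ : v ∈ C₂)
            (_ : t ∈ C₂), clusterDiam G C₂) + (3 * clusterDiam G C + G.dist u v) := key2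
        _ = 3 * clusterDiam G C + (G.dist u v + 3 * (⨅ (C₂ : Set V) (_ : C₂ ∈ LP.P)
            (_ : v ∈ C₂) (_ : t ∈ C₂), clusterDiam G C₂)) := by ring
    calc D₁.dist s t ≤ 3 * pairDiam LP s u +
          (G.dist u v + 3 * pairDiam LP v t) := key
      _ = 3 * pairDiam LP s u + G.dist u v + 3 * pairDiam LP v t := by ring
end

section
/- Let G = (V, E, w) be a weighted digraph, let π = (v₀, v₁, …, v_q) be a shortest path in G, and let x ∈ V be a vertex from which at least one vertex of π is reachable. Let ρ = min_{0≤i≤q} d_G(x, v_i), for R ≥ 0 let S(R) = {i ∈ {0, …, q} : d_G(x, v_i) ≤ R}, let η = min{R ≥ ρ : S(R) is upward closed in {0, …, q}}, and let m = min S(η). Let I = {i ∈ {m, …, q} : d_G(x, v_i) < d_G(x, v_j) for all j with m ≤ j < i} (so m ∈ I), enumerate I in decreasing order as i₁ > i₂ > … > i_l (thus i_l = m), and write y_r = v_{i_r} for 1 ≤ r ≤ l and y₀ = v_q. Then: (i) for every r with 2 ≤ r ≤ l, d_G(x, y_r) ≤ max_{1 ≤ r' ≤ r−1} ( d_G(x,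 y_{r'}) + d_G(y_{r'}, y_{r'−1}) ); and (ii) η ≤ max_{1 ≤ r ≤ l} ( d_G(x, y_r) + d_G(y_r, y_{r−1}) ). -/
open scoped ENNReal BigOperators

namespace WDigraph

variable {V : Type}

theorem PathW.trans' {G : WDigraph V} {u v w : V} {c c' : ℝ}
    (h : G.PathW u v c) (h' : G.PathW v w c') : G.PathW u w (c + c') := by
  induction h with
  | nil => simpa using h'
  | cons e _ ih => rw [add_assoc]; exact PathW.cons e (ih h')

theorem dist_le_of_path {G : WDigraph V} {u v : V} {c : ℝ} (h : G.PathW u v c) :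
    G.dist u v ≤ ENNReal.ofReal c :=
  iInf_le_of_le c (iInf_le _ h)

theorem dist_triangle' (G : WDigraph V) (u v w : V) :
    G.dist u w ≤ G.dist u v + G.dist v w := by
  conv_rhs => rw [dist, dist]
  rw [ENNReal.iInf_add]
  refine le_iInf fun c => ?_
  rw [ENNReal.iInf_add]
  refine le_iInf fun hc => ?_
  rw [ENNReal.add_iInf]
  refine le_iInf fun c' => ?_
  rw [ENNReal.add_iInf]
  refine le_iInf fun hc' => ?_
  exact (dist_le_of_path (hc.trans' hc')).trans ENNReal.ofReal_add_le

end WDigraph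

/-- with `ρ`, `η`, `m` as in the preceding lemma, let
`I = {i ∈ [m,q] : d_G(x,v_i) < d_G(x,v_j) for all m ≤ j < i}`, enumerated in decreasing
order as `i₁ > … > i_l`, and set `y_r = v_{i_r}`, `y₀ = v_q`.  Then
(i) for `2 ≤ r ≤ l`, `d_G(x,y_r) ≤ max_{1 ≤ r' ≤ r−1}(d_G(x,y_{r'}) + d_G(y_{r'},y_{r'−1}))`,
and (ii) `η ≤ max_{1 ≤ r ≤ l}(d_G(x,y_r) + d_G(y_r,y_{r−1}))`. -/
theorem eta_peak_bounds {V : Type} [Fintype V] (G : WDigraph V)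
    (q : ℕ) (z : ℕ → V)
    (hedge : ∀ i, i < q → G.E (z i) (z (i + 1)))
    (hshort : ∀ a b : ℕ, a ≤ b → b ≤ q →
      G.dist (z a) (z b) = ENNReal.ofReal (∑ i ∈ Finset.Ico a b, G.w (z i) (z (i + 1))))
    (x : V) (hreach : ∃ i, i ≤ q ∧ G.Reach x (z i))
    (ρ : ℝ≥0∞) (hρ : ρ = ⨅ i ∈ Finset.Iic q, G.dist x (z i))
    (η : ℝ≥0∞)
    (hη : IsLeast {R : ℝ≥0∞ | ρ ≤ R ∧
      ∀ i, i ≤ q → G.dist x (z i) ≤ R →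
        ∀ j, i ≤ j → j ≤ q → G.dist x (z j) ≤ R} η)
    (m : ℕ) (hm : m = sInf {i : ℕ | i ≤ q ∧ G.dist x (z i) ≤ η})
    (I : Set ℕ)
    (hI : I = {i : ℕ | m ≤ i ∧ i ≤ q ∧
      ∀ j, m ≤ j → j < i → G.dist x (z i) < G.dist x (z j)})
    (l : ℕ) (hl : 1 ≤ l) (idx : ℕ → ℕ)
    (hdec : ∀ r, 1 ≤ r → r < l → idx (r + 1) < idx r)
    (hmem : ∀ r, 1 ≤ r → r ≤ l → idx r ∈ I)
    (hsurj : ∀ i ∈ I, ∃ r, 1 ≤ r ∧ r ≤ l ∧ idx r = i)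
    (y : ℕ → V) (hy0 : y 0 = z q) (hy : ∀ r, 1 ≤ r → r ≤ l → y r = z (idx r)) :
    (∀ r, 2 ≤ r → r ≤ l →
      G.dist x (y r) ≤
        ⨆ r' ∈ Finset.Icc 1 (r - 1), (G.dist x (y r') + G.dist (y r') (y (r' - 1)))) ∧
    η ≤ ⨆ r ∈ Finset.Icc 1 l, (G.dist x (y r) + G.dist (y r) (y (r - 1))) := by
  classical
  have hmem' : ∀ r, 1 ≤ r → r ≤ l → m ≤ idx r ∧ idx r ≤ q ∧
      ∀ j, m ≤ j → j < idx r → G.dist x (z (idx r)) < G.dist x (z j) := by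
    intro r h1 h2
    have h := hmem r h1 h2
    rw [hI] at h
    exact h
  have hstrict : ∀ r t, 1 ≤ r → r < t → t ≤ l → idx t < idx r := by
    intro r t hr1 hrt htl
    induction t with
    | zero => omega
    | succ t IH =>
      rcases Nat.lt_or_ge r t with h | h
      · have h1 : idx t < idx r := IH h (by omega)
        have h2 : idx (t + 1) < idx t := hdec t (by omega) (by omega)
        omega
      · have heq : r = t := by omega
        subst heq
        exact hdec r hr1 (by omega)
  have hrecmono : ∀ r t, 1 ≤ r → r ≤ t → t ≤ l →
      G.dist x (z (idx r)) ≤ G.dist x (z (idx t)) := by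
    intro r t hr1 hrt htl
    rcases eq_or_lt_of_le hrt with rfl | h
    · exact le_rfl
    · exact le_of_lt ((hmem' r hr1 (by omega)).2.2 (idx t) (hmem' t (by omega) htl).1
        (hstrict r t hr1 h htl))
  have hSne : ∃ i, i ∈ {i : ℕ | i ≤ q ∧ G.dist x (z i) ≤ η} := by
    have hne : (Finset.Iic q).Nonempty := ⟨0, by simp⟩
    obtain ⟨i, hi, hival⟩ := Finset.exists_mem_eq_inf (Finset.Iic q) hne
      (fun i => G.dist x (z i))
    refine ⟨i, Finset.mem_Iic.mp hi, ?_⟩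
    have hρi : ρ = G.dist x (z i) := by
      rw [hρ, ← Finset.inf_eq_iInf, hival]
    rw [← hρi]
    exact hη.1.1
  have hmS : m ≤ q ∧ G.dist x (z m) ≤ η := by
    have h := Nat.sInf_mem hSne
    rw [← hm] at h
    exact h
  have h_up_η : ∀ j, m ≤ j → j ≤ q → G.dist x (z j) ≤ η :=
    fun j hmj hjq => hη.1.2 m hmS.1 hmS.2 j hmj hjq
  have h_lt_m : ∀ i, i < m → i ≤ q → η < G.dist x (z i) := by
    intro i him hiq
    by_contra h
    push_neg at h
    have hi : i ∈ {i : ℕ | i ≤ q ∧ G.dist x (z i) ≤ η} := ⟨hiq, h⟩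
    have hle := Nat.sInf_le hi
    rw [← hm] at hle
    omega
  have h_mI : m ∈ I := by
    rw [hI]
    exact ⟨le_rfl, hmS.1, fun j hmj hjm => absurd hmj (by omega)⟩
  have h_idxl : idx l = m := by
    obtain ⟨t, ht1, htl, hti⟩ := hsurj m h_mI
    rcases eq_or_lt_of_le htl with rfl | h
    · exact hti
    · exfalso
      have h1 := hstrict t l ht1 h le_rfl
      have h2 := (hmem' l hl le_rfl).1
      omega
  have hsegmono : ∀ a b b', a ≤ b → b ≤ b' → b' ≤ q →
      G.dist (z a) (z b) ≤ G.dist (z a) (z b') := by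
    intro a b b' hab hbb' hb'q
    rw [hshort a b hab (le_trans hbb' hb'q), hshort a b' (le_trans hab hbb') hb'q]
    refine ENNReal.ofReal_le_ofReal ?_
    refine Finset.sum_le_sum_of_subset_of_nonneg (Finset.Ico_subset_Ico le_rfl hbb') ?_
    intro i hi _
    exact le_of_lt (G.w_pos _ _ (hedge i (lt_of_lt_of_le (Finset.mem_Ico.mp hi).2 hb'q)))
  -- Claim C
  have hC : ∀ k, 1 ≤ k → k ≤ l → ∀ j, idx k ≤ j → j ≤ q →
      G.dist x (z j) ≤ ⨆ r' ∈ Finset.Icc 1 k,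
        (G.dist x (y r') + G.dist (y r') (y (r' - 1))) := by
    intro k hk1 hkl j hkj hjq
    obtain ⟨s, hs1, hsk, hsj, hsmin⟩ :
        ∃ s, 1 ≤ s ∧ s ≤ k ∧ idx s ≤ j ∧ ∀ t, t < s → ¬(1 ≤ t ∧ t ≤ k ∧ idx t ≤ j) := by
      have hTne : {r' | 1 ≤ r' ∧ r' ≤ k ∧ idx r' ≤ j}.Nonempty := ⟨k, hk1, le_rfl, hkj⟩
      have hmemT := Nat.sInf_mem hTne
      exact ⟨sInf {r' | 1 ≤ r' ∧ r' ≤ k ∧ idx r' ≤ j}, hmemT.1, hmemT.2.1, hmemT.2.2,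
        fun t ht => Nat.notMem_of_lt_sInf ht⟩
    have hsl : s ≤ l := le_trans hsk hkl
    have hstep2 : G.dist (z (idx s)) (z j) ≤ G.dist (z (idx s)) (y (s - 1)) := by
      rcases eq_or_lt_of_le hs1 with h1 | h2
      · subst h1
        simp only [Nat.sub_self, hy0]
        exact hsegmono (idx 1) j q hsj hjq le_rfl
      · have hjlt : j < idx (s - 1) := by
          by_contra hcon
          push_neg at hcon
          exact hsmin (s - 1) (by omega) ⟨by omega, by omega, hcon⟩
        rw [hy (s - 1) (by omega) (by omega)]
        exact hsegmono (idx s) j (idx (s - 1)) hsj (le_of_lt hjlt)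
          (hmem' (s - 1) (by omega) (by omega)).2.1
    have htri : G.dist x (z j) ≤ G.dist x (y s) + G.dist (y s) (y (s - 1)) := by
      rw [hy s hs1 hsl]
      exact le_trans (G.dist_triangle' x (z (idx s)) (z j)) (add_le_add le_rfl hstep2)
    refine le_trans htri ?_
    exact le_iSup₂ (f := fun r' (_ : r' ∈ Finset.Icc 1 k) =>
      G.dist x (y r') + G.dist (y r') (y (r' - 1))) s (Finset.mem_Icc.mpr ⟨hs1, hsk⟩)
  -- Claim D
  have hD : ∀ r, 2 ≤ r → r ≤ l → ∀ j, m ≤ j → j < idx (r - 1) →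
      G.dist x (z (idx r)) ≤ G.dist x (z j) := by
    intro r hr2 hrl j
    induction j using Nat.strong_induction_on with
    | _ j IH =>
      intro hmj hjlt
      have hjq : j ≤ q := le_trans (le_of_lt hjlt) (hmem' (r - 1) (by omega) (by omega)).2.1
      by_cases hjI : j ∈ I
      · obtain ⟨t, ht1, htl, hti⟩ := hsurj j hjI
        have hrt : r ≤ t := by
          by_contra hcon
          push_neg at hcon
          have hle : idx (r - 1) ≤ idx t := by
            rcases eq_or_lt_of_le (show t ≤ r - 1 by omega) with rfl | hlt
            · exact le_rfl
            · exact le_of_lt (hstrict t (r - 1) ht1 hlt (by omega))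
          omega
        rw [← hti]
        exact hrecmono r t (by omega) hrt htl
      · have hnot : ¬(m ≤ j ∧ j ≤ q ∧
            ∀ j', m ≤ j' → j' < j → G.dist x (z j) < G.dist x (z j')) := by
          rw [hI] at hjI
          exact hjI
        have hex : ∃ j', m ≤ j' ∧ j' < j ∧ G.dist x (z j') ≤ G.dist x (z j) := by
          by_contra hcon
          push_neg at hcon
          exact hnot ⟨hmj, hjq, hcon⟩
        obtain ⟨j', h1, h2, h3⟩ := hex
        exact le_trans (IH j' h2 h1 (by omega)) h3
  constructor
  · intro r hr2 hrl
    by_cases hcase : G.dist x (y r) ≤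
        ⨆ r' ∈ Finset.Icc 1 (r - 1), (G.dist x (y r') + G.dist (y r') (y (r' - 1)))
    · exact hcase
    by_cases hηR : η ≤
        ⨆ r' ∈ Finset.Icc 1 (r - 1), (G.dist x (y r') + G.dist (y r') (y (r' - 1)))
    · refine le_trans ?_ hηR
      rw [hy r (by omega) hrl]
      exact h_up_η (idx r) (hmem' r (by omega) hrl).1 (hmem' r (by omega) hrl).2.1
    · exfalso
      apply hηR
      refine hη.2 ⟨?_, ?_⟩
      · rw [hρ]
        refine le_trans (iInf₂_le (idx 1) (Finset.mem_Iic.mpr (hmem' 1 le_rfl hl).2.1)) ?_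
        rw [← hy 1 le_rfl hl]
        exact le_trans le_self_add (le_iSup₂ (f := fun r' (_ : r' ∈ Finset.Icc 1 (r - 1)) =>
          G.dist x (y r') + G.dist (y r') (y (r' - 1))) 1 (Finset.mem_Icc.mpr ⟨le_rfl, by omega⟩))
      · intro i hiq hdi j hij hjq
        have him : m ≤ i := by
          by_contra hcon
          push_neg at hcon
          exact hηR (le_trans (le_of_lt (h_lt_m i hcon hiq)) hdi)
        have hir : idx (r - 1) ≤ i := by
          by_contra hcon
          push_neg at hcon
          have h := hD r hr2 hrl i him hcon
          rw [← hy r (by omega) hrl] at h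
          exact hcase (le_trans h hdi)
        exact hC (r - 1) (by omega) (by omega) j (le_trans hir hij) hjq
  · by_cases hηM : η ≤ ⨆ r ∈ Finset.Icc 1 l, (G.dist x (y r) + G.dist (y r) (y (r - 1)))
    · exact hηM
    · exfalso
      apply hηM
      refine hη.2 ⟨?_, ?_⟩
      · rw [hρ]
        refine le_trans (iInf₂_le (idx 1) (Finset.mem_Iic.mpr (hmem' 1 le_rfl hl).2.1)) ?_
        rw [← hy 1 le_rfl hl]
        exact le_trans le_self_add (le_iSup₂ (f := fun r (_ : r ∈ Finset.Icc 1 l) =>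
          G.dist x (y r) + G.dist (y r) (y (r - 1))) 1 (Finset.mem_Icc.mpr ⟨le_rfl, hl⟩))
      · intro i hiq hdi j hij hjq
        have him : m ≤ i := by
          by_contra hcon
          push_neg at hcon
          exact hηM (le_trans (le_of_lt (h_lt_m i hcon hiq)) hdi)
        refine hC l hl le_rfl j ?_ hjq
        rw [h_idxl]
        exact le_trans him hij
end

section
/- Let n ≥ 2 and let C_n be the directed cycle on vertices v₁, …, v_n with edge set {(v₁, v₂), (v₂, v₃), …, (v_{n−1}, v_n), (v_n, v₁)}. (i) For every subgraph D of C_n (same vertices, a subset of the edges) that contains no directed cycle, there is at most one index i ∈ {1, …, n} such that v_{i+1} ⇝_D v_i (indices taken modulo n). (ii) Consequently, if D₁, …, D_g are subgraphs of C_n, each containing no directed cycle, such that for every ordered pair (u, v) with u ⇝_{C_n} v there is some j with u ⇝_{D_j} v, then g ≥ n. -/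
namespace Stmt13Aux

variable {n : ℕ}

lemma iter_val (succ : Fin n → Fin n)
    (hsucc : ∀ i : Fin n, (succ i : ℕ) = ((i : ℕ) + 1) % n)
    (k : ℕ) (a : Fin n) : ((succ^[k] a : Fin n) : ℕ) = ((a : ℕ) + k) % n := by
  induction k with
  | zero => simp [Nat.mod_eq_of_lt a.isLt]
  | succ k ih =>
    rw [Function.iterate_succ_apply', hsucc, ih, Nat.mod_add_mod, Nat.add_assoc]

lemma walk_struct (succ : Fin n → Fin n) (D : Fin n → Fin n → Prop)
    (hD : ∀ u v, D u v → v = succ u) {a b : Fin n}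
    (h : Relation.ReflTransGen D a b) :
    a = b ∨ ∃ k, b = succ^[k+1] a ∧ ∀ m ≤ k, D (succ^[m] a) (succ^[m+1] a) := by
  induction h using Relation.ReflTransGen.head_induction_on with
  | refl => exact Or.inl rfl
  | head hac hcb ih =>
    rename_i a' c
    obtain rfl := hD _ _ hac
    rcases ih with heq | ⟨k, hb, he⟩
    · refine Or.inr ⟨0, by simpa using heq.symm, ?_⟩
      intro m hm
      interval_cases m
      simpa using hac
    · refine Or.inr ⟨k + 1, ?_, ?_⟩
      · rw [hb]
        exact (Function.iterate_succ_apply succ (k + 1) a').symm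
      · intro m hm
        match m with
        | 0 => simpa using hac
        | (m' + 1) =>
          have := he m' (by omega)
          rw [Function.iterate_succ_apply succ m' a',
              Function.iterate_succ_apply succ (m' + 1) a']
          exact this

lemma chain_trans (succ : Fin n → Fin n) (D : Fin n → Fin n → Prop) (a : Fin n) :
    ∀ k, 1 ≤ k → (∀ m < k, D (succ^[m] a) (succ^[m+1] a)) →
      Relation.TransGen D a (succ^[k] a) := by
  intro k
  induction k with
  | zero => omega
  | succ k ih =>
    intro _ h
    rcases Nat.eq_zero_or_pos k with rfl | hk
    · exact Relation.TransGen.single (by simpa using h 0 (by omega))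
    · exact (ih hk (fun m hm => h m (by omega))).tail (h k (by omega))

lemma edges_of_reach (hn : 2 ≤ n) (succ : Fin n → Fin n)
    (hsucc : ∀ i : Fin n, (succ i : ℕ) = ((i : ℕ) + 1) % n)
    (D : Fin n → Fin n → Prop)
    (hD : ∀ u v, D u v → v = succ u)
    (hacyc : ∀ v, ¬ Relation.TransGen D v v)
    {i : Fin n} (h : Relation.ReflTransGen D (succ i) i) :
    ∀ u : Fin n, u ≠ i → D u (succ u) := by
  have hiter := iter_val succ hsucc
  rcases walk_struct succ D hD h with heq | ⟨k, hb, he⟩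
  · exfalso
    have h1 : ((succ i : Fin n) : ℕ) = ((i : ℕ) + 1) % n := hsucc i
    have hi : (i : ℕ) < n := i.isLt
    rw [heq] at h1
    rcases Nat.lt_or_ge ((i : ℕ) + 1) n with h2 | h2
    · rw [Nat.mod_eq_of_lt h2] at h1; omega
    · have h3 : (i : ℕ) + 1 = n := by omega
      rw [h3, Nat.mod_self] at h1; omega
  · -- first : k + 2 ≤ n, else acyclicity is violated
    have hfix : succ^[n] (succ i) = succ i := by
      apply Fin.ext
      rw [hiter, Nat.add_mod_right, Nat.mod_eq_of_lt (succ i).isLt]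
    have hk2 : k + 2 ≤ n := by
      by_contra hcon
      apply hacyc (succ i)
      have := chain_trans succ D (succ i) n (by omega) (fun m hm => he m (by omega))
      rwa [hfix] at this
    -- from hb : i = succ^[k+1] (succ i), deduce k + 2 = n
    have hv : (i : ℕ) = ((i : ℕ) + (k + 2)) % n := by
      have h0 := congrArg Fin.val hb
      rw [hiter, hsucc, Nat.mod_add_mod] at h0
      have h1 : (i : ℕ) + 1 + (k + 1) = (i : ℕ) + (k + 2) := by omega
      rwa [h1] at h0
    have hi : (i : ℕ) < n := i.isLt
    have hkn : k + 2 = n := by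
      rcases Nat.lt_or_ge ((i : ℕ) + (k + 2)) n with h2 | h2
      · rw [Nat.mod_eq_of_lt h2] at hv; omega
      · rw [Nat.mod_eq_sub_mod h2, Nat.mod_eq_of_lt (by omega)] at hv; omega
    -- now produce each edge u → succ u for u ≠ i
    intro u hu
    have huv : (u : ℕ) ≠ (i : ℕ) := fun hh => hu (Fin.ext hh)
    have hun : (u : ℕ) < n := u.isLt
    set t : ℕ := if (i : ℕ) < (u : ℕ) then (u : ℕ) - i else (u : ℕ) + n - i with ht
    have htb : 1 ≤ t ∧ t ≤ n - 1 := by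
      rw [ht]; split_ifs with hc <;> omega
    have hti : ((i : ℕ) + t) % n = (u : ℕ) := by
      rw [ht]; split_ifs with hc
      · have h1 : (i : ℕ) + ((u : ℕ) - i) = (u : ℕ) := by omega
        rw [h1, Nat.mod_eq_of_lt hun]
      · have h1 : (i : ℕ) + ((u : ℕ) + n - i) = (u : ℕ) + n := by omega
        rw [h1, Nat.add_mod_right, Nat.mod_eq_of_lt hun]
    have hedge := he (t - 1) (by omega)
    have e1 : succ^[t-1] (succ i) = u := by
      rw [← Function.iterate_succ_apply]
      apply Fin.ext
      rw [hiter]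
      have h3 : (t - 1).succ = t := by omega
      rw [h3, hti]
    have e2 : succ^[t-1+1] (succ i) = succ u := by
      rw [Function.iterate_succ_apply', e1]
    rw [e1, e2] at hedge
    exact hedge

lemma part1 (hn : 2 ≤ n) (succ : Fin n → Fin n)
    (hsucc : ∀ i : Fin n, (succ i : ℕ) = ((i : ℕ) + 1) % n)
    (D : Fin n → Fin n → Prop)
    (hD : ∀ u v, D u v → v = succ u)
    (hacyc : ∀ v, ¬ Relation.TransGen D v v)
    {i i' : Fin n}
    (h : Relation.ReflTransGen D (succ i) i)
    (h' : Relation.ReflTransGen D (succ i') i') : i = i' := by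
  by_contra hne
  have A := edges_of_reach hn succ hsucc D hD hacyc h
  have B := edges_of_reach hn succ hsucc D hD hacyc h'
  have hall : ∀ u, D u (succ u) := by
    intro u
    by_cases hu : u = i
    · exact B u (by rw [hu]; exact hne)
    · exact A u hu
  have hfix : succ^[n] i = i := by
    apply Fin.ext
    rw [iter_val succ hsucc, Nat.add_mod_right, Nat.mod_eq_of_lt i.isLt]
  apply hacyc i
  have := chain_trans succ D i n (by omega)
    (fun m _ => by rw [Function.iterate_succ_apply']; exact hall _)
  rwa [hfix] at this

lemma reach_iter (succ : Fin n → Fin n) (k : ℕ) (a : Fin n) :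
    Relation.ReflTransGen (fun a b => b = succ a) a (succ^[k] a) := by
  induction k with
  | zero => exact Relation.ReflTransGen.refl
  | succ k ih => exact ih.tail (Function.iterate_succ_apply' succ k a)

end Stmt13Aux

/-- on the directed cycle `C_n` (vertices `Fin n`, edges `i → i+1 (mod n)`,
encoded via the successor map `succ`): (i) every acyclic subgraph `D` of `C_n` satisfies
reachability `succ i ⇝_D i` for at most one index `i`; (ii) hence any family of acyclic
subgraphs of `C_n` covering all reachability pairs of `C_n` has at least `n` members. -/
theorem directed_cycle_dag_cover_lower_bound (n : ℕ) (hn : 2 ≤ n)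
    (succ : Fin n → Fin n)
    (hsucc : ∀ i : Fin n, (succ i : ℕ) = ((i : ℕ) + 1) % n) :
    (∀ D : Fin n → Fin n → Prop,
      (∀ u v : Fin n, D u v → v = succ u) →
      (∀ v : Fin n, ¬ Relation.TransGen D v v) →
      ∀ i i' : Fin n,
        Relation.ReflTransGen D (succ i) i → Relation.ReflTransGen D (succ i') i' →
        i = i') ∧
    (∀ (g : ℕ) (D : Fin g → Fin n → Fin n → Prop),
      (∀ j, ∀ u v : Fin n, D j u v → v = succ u) →
      (∀ j, ∀ v : Fin n, ¬ Relation.TransGen (D j) v v) →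
      (∀ u v : Fin n, Relation.ReflTransGen (fun a b => b = succ a) u v →
        ∃ j, Relation.ReflTransGen (D j) u v) →
      n ≤ g) := by
  constructor
  · intro D hD hacyc i i' h h'
    exact Stmt13Aux.part1 hn succ hsucc D hD hacyc h h'
  · intro g D hD hacyc hcov
    have hreach : ∀ i : Fin n,
        Relation.ReflTransGen (fun a b => b = succ a) (succ i) i := by
      intro i
      have h1 : succ^[n-1] (succ i) = i := by
        apply Fin.ext
        rw [Stmt13Aux.iter_val succ hsucc, hsucc, Nat.mod_add_mod]
        have h2 : (i : ℕ) + 1 + (n - 1) = (i : ℕ) + n := by omega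
        rw [h2, Nat.add_mod_right, Nat.mod_eq_of_lt i.isLt]
      have := Stmt13Aux.reach_iter succ (n - 1) (succ i)
      rwa [h1] at this
    choose f hf using fun i => hcov (succ i) i (hreach i)
    have hinj : Function.Injective f := by
      intro i i' he
      have h2 := hf i'
      rw [← he] at h2
      exact Stmt13Aux.part1 hn succ hsucc (D (f i)) (hD _) (hacyc _) (hf i) h2
    calc n = Fintype.card (Fin n) := (Fintype.card_fin n).symm
      _ ≤ Fintype.card (Fin g) := Fintype.card_le_of_injective f hinj
      _ = g := Fintype.card_fin g
end
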